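/- Let V be a finite-dimensional real vector space, W a finite-dimensional linear subspace of the space of symmetric bilinear forms on V, and v₀ ∈ V. Then v₀ is not a null vector of any nonzero w ∈ W if and only if the linear map V → W* sending u to the functional w ↦ w(u, v₀) is surjective. (This is the surjectivity of the derivative of the map γ(v) = (w ↦ w(v,v)) at points of Y_W^ns, which shows that Z_n is a manifold.) -/

import Mathlib

open Module

set_option maxHeartbeats 1000000 in
set_option synthInstance.maxHeartbeats 100000 in
theorem not_null_iff_dual_evaluation_surjective
    {V : Type*} [AddCommGroup V] [Module ℝ V] [FiniteDimensional ℝ V]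
    (W : Submodule ℝ (V →ₗ[ℝ] V →ₗ[ℝ] ℝ))
    (hsymm : ∀ w ∈ W, ∀ u v : V, w u v = w v u)
    (v₀ : V) :
    (∀ w ∈ W, w ≠ 0 → ∃ u : V, w v₀ u ≠ 0) ↔
      Function.Surjective (fun u : V =>
        ((LinearMap.applyₗ v₀) ∘ₗ (LinearMap.applyₗ u) ∘ₗ W.subtype : Module.Dual ℝ W)) := by
  letI : AddCommGroup ↥W := @Submodule.addCommGroup ℝ (V →ₗ[ℝ] V →ₗ[ℝ] ℝ) _ _ _ W
  haveI hfd : FiniteDimensional ℝ ↥W := inferInstance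
  haveI : Module.Free ℝ ↥W := Module.Free.of_divisionRing ℝ ↥W
  haveI : Module.Projective ℝ ↥W := Module.Projective.of_free
  haveI : IsReflexive ℝ ↥W := inferInstance
  set T : V → Module.Dual ℝ W := fun u =>
    ((LinearMap.applyₗ v₀) ∘ₗ (LinearMap.applyₗ u) ∘ₗ W.subtype : Module.Dual ℝ W) with hT
  have hTapp : ∀ u : V, ∀ w : W, T u w = (w : V →ₗ[ℝ] V →ₗ[ℝ] ℝ) u v₀ := fun u w => rfl
  set Tl : V →ₗ[ℝ] Module.Dual ℝ W :=
    { toFun := T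
      map_add' := fun x y => by ext w; simp [hTapp]
      map_smul' := fun c x => by ext w; simp [hTapp] }
  constructor
  · intro h
    show Function.Surjective ⇑Tl
    rw [← LinearMap.range_eq_top (f := Tl)]
    by_contra hn
    haveI : Module.Free ℝ (Dual ℝ ↥W ⧸ LinearMap.range Tl) := Module.Free.of_divisionRing ℝ _
    obtain ⟨f, hf, hbot⟩ := Submodule.exists_dual_map_eq_bot_of_lt_top
      (lt_top_iff_ne_top.mpr hn) inferInstance
    set w : W := (Module.evalEquiv ℝ W).symm f with hw
    have hw0 : w ≠ 0 := by
      simp only [hw, ne_eq, map_eq_zero_iff _ (Module.evalEquiv ℝ W).symm.injective]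
      exact hf
    obtain ⟨u, hu⟩ := h w w.2 (by simpa [ZeroMemClass.coe_eq_zero] using hw0)
    apply hu
    have : Tl u w = 0 := by
      have hmem : Tl u ∈ LinearMap.range Tl := ⟨u, rfl⟩
      have : f (Tl u) = 0 := by
        have := Submodule.map_le_iff_le_comap.mp hbot.le hmem
        simpa using this
      calc Tl u w = f (Tl u) := Module.apply_evalEquiv_symm_apply ℝ ↥W (Tl u) f
        _ = 0 := this
    rw [hsymm w w.2 v₀ u]
    exact this
  · intro hsurj w hwW hw0 
    set wW : W := ⟨w, hwW⟩ with hwW'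
    have hwW0 : wW ≠ 0 := by simpa [hwW', Submodule.mk_eq_zero] using hw0
    haveI : Module.Projective ℝ ↥W := Module.Projective.of_free
    obtain ⟨f, hf⟩ : ∃ f : Module.Dual ℝ W, f wW ≠ 0 := by
      by_contra hc
      push_neg at hc
      exact hwW0 ((Module.forall_dual_apply_eq_zero_iff ℝ wW).mp hc)
    obtain ⟨u, hu⟩ := hsurj f
    refine ⟨u, ?_⟩
    rw [hsymm w hwW v₀ u]
    have : T u wW = f wW := by rw [hu]
    rw [hTapp] at this
    intro h0; apply hf; rw [← this]; exact h0
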